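/- arXiv:1206.1783 — 6 statements merged into one kernel-verified Lean document; each statement's English description precedes it below -/
import Mathlib

section
/- Fix k > 0, β₁ > 0, β₂ > 0 and let u₁(x₁,x₂) = log x₁ + β₁ log(k − x₁ − x₂), u₂(x₁,x₂) = log x₂ + β₂ log(k − x₁ − x₂). For every point (x₁,x₂) with x₁ > 0, x₂ > 0 and x₁ + x₂ < k, the gradients ∇u₁(x₁,x₂) = (1/x₁ − β₁/(k−x₁−x₂), −β₁/(k−x₁−x₂)) and ∇u₂(x₁,x₂) = (−β₂/(k−x₁−x₂), 1/x₂ − β₂/(k−x₁−x₂)) are linearly dependent if and only if (1+β₁)x₁ + (1+β₂)x₂ = k. -/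
/-- Fix `k > 0`, `β₁ > 0`, `β₂ > 0`. For every point `(x₁, x₂)` with `x₁ > 0`,
`x₂ > 0` and `x₁ + x₂ < k`, the gradients
`∇u₁ = (1/x₁ - β₁/(k-x₁-x₂), -β₁/(k-x₁-x₂))` and
`∇u₂ = (-β₂/(k-x₁-x₂), 1/x₂ - β₂/(k-x₁-x₂))` are linearly dependent
if and only if `(1+β₁) x₁ + (1+β₂) x₂ = k`. -/
theorem stmt_3 (k β₁ β₂ x₁ x₂ : ℝ) (hk : 0 < k) (hβ₁ : 0 < β₁) (hβ₂ : 0 < β₂)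
    (hx₁ : 0 < x₁) (hx₂ : 0 < x₂) (hsum : x₁ + x₂ < k) :
    ¬ LinearIndependent ℝ
        ![((1 / x₁ - β₁ / (k - x₁ - x₂), -β₁ / (k - x₁ - x₂)) : ℝ × ℝ),
          ((-β₂ / (k - x₁ - x₂), 1 / x₂ - β₂ / (k - x₁ - x₂)) : ℝ × ℝ)]
      ↔ (1 + β₁) * x₁ + (1 + β₂) * x₂ = k := by
  have hs : 0 < k - x₁ - x₂ := by linarith
  rw [linearIndependent_fin2]
  push_neg
  simp only [Matrix.cons_val_one, Matrix.head_cons, Matrix.cons_val_zero]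
  constructor
  · intro h
    have hne : ((-β₂ / (k - x₁ - x₂), 1 / x₂ - β₂ / (k - x₁ - x₂)) : ℝ × ℝ) ≠ 0 := by
      intro hc
      have h1 : -β₂ / (k - x₁ - x₂) = 0 := congrArg Prod.fst hc
      have : β₂ = 0 := by
        field_simp at h1
        linarith
      linarith
    obtain ⟨a, ha⟩ := h hne
    have h1 : a * (-β₂ / (k - x₁ - x₂)) = 1 / x₁ - β₁ / (k - x₁ - x₂) :=
      congrArg Prod.fst ha
    have h2 : a * (1 / x₂ - β₂ / (k - x₁ - x₂)) = -β₁ / (k - x₁ - x₂) :=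
      congrArg Prod.snd ha
    have h1' : -(a * β₂ * x₁) = (k - x₁ - x₂) - β₁ * x₁ := by
      field_simp at h1
      have h0 : (-(a * β₂ * x₁) - ((k - x₁ - x₂) - β₁ * x₁)) * (k - x₁ - x₂) = 0 := by
        linear_combination (k - x₁ - x₂) * h1
      rcases mul_eq_zero.mp h0 with h' | h'
      · linarith
      · exact absurd h' (by linarith)
    have h2' : a * ((k - x₁ - x₂) - β₂ * x₂) = -(β₁ * x₂) := by
      field_simp at h2
      have h0 : (a * ((k - x₁ - x₂) - β₂ * x₂) - (-(β₁ * x₂))) * (k - x₁ - x₂) = 0 := by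
        linear_combination (k - x₁ - x₂) * h2
      rcases mul_eq_zero.mp h0 with h' | h'
      · linarith
      · exact absurd h' (by linarith)
    -- eliminate a
    have key : (k - x₁ - x₂) * (β₁ * x₁ + β₂ * x₂ - (k - x₁ - x₂)) = 0 := by
      linear_combination ((k - x₁ - x₂) - β₂ * x₂) * h1' + (β₂ * x₁) * h2'
    have := mul_eq_zero.mp key
    rcases this with h | h
    · linarith
    · linarith
  · intro h
    intro hne
    refine ⟨(β₁ * x₁ - (k - x₁ - x₂)) / (β₂ * x₁), ?_⟩
    have hs' : k - x₁ - x₂ = β₁ * x₁ + β₂ * x₂ := by linarith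
    have hβx : β₂ * x₁ ≠ 0 := by positivity
    ext
    · show (β₁ * x₁ - (k - x₁ - x₂)) / (β₂ * x₁) * (-β₂ / (k - x₁ - x₂))
        = 1 / x₁ - β₁ / (k - x₁ - x₂)
      rw [hs']
      have h1 : β₁ * x₁ + β₂ * x₂ > 0 := by positivity
      field_simp
      ring
    · show (β₁ * x₁ - (k - x₁ - x₂)) / (β₂ * x₁) * (1 / x₂ - β₂ / (k - x₁ - x₂))
        = -β₁ / (k - x₁ - x₂)
      rw [hs']
      have h1 : β₁ * x₁ + β₂ * x₂ > 0 := by positivity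
      field_simp
      ring
end

section
/- Fix k > 0, β₁ > 0, β₂ > 0 and let u₁(x₁,x₂) = log x₁ + β₁ log(k − x₁ − x₂), u₂(x₁,x₂) = log x₂ + β₂ log(k − x₁ − x₂). Let x = (x₁,x₂) satisfy x₁ > 0, x₂ > 0, x₁ + x₂ < k and (1+β₁)x₁ + (1+β₂)x₂ = k. Then for every y = (y₁,y₂) with y₁ > 0, y₂ > 0, y₁ + y₂ < k and y ≠ x, either u₁(y) < u₁(x) or u₂(y) < u₂(x). That is, every point of the frontier segment is strictly Pareto efficient: no other feasible point weakly improves both parties' utilities. -/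
/-- Fix `k > 0`, `β₁ > 0`, `β₂ > 0` and the utilities
`u₁ (x₁,x₂) = log x₁ + β₁ * log (k-x₁-x₂)`, `u₂ (x₁,x₂) = log x₂ + β₂ * log (k-x₁-x₂)`.
If `x = (x₁,x₂)` lies in the open region and on the line `(1+β₁)x₁+(1+β₂)x₂ = k`,
then every other point `y` of the open region strictly decreases the utility of
at least one party: points of the frontier are strictly Pareto efficient. -/
theorem stmt_5 (k β₁ β₂ : ℝ) (hk : 0 < k) (hβ₁ : 0 < β₁) (hβ₂ : 0 < β₂)
    (u₁ u₂ : ℝ × ℝ → ℝ)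
    (hu₁ : ∀ p : ℝ × ℝ, u₁ p = Real.log p.1 + β₁ * Real.log (k - p.1 - p.2))
    (hu₂ : ∀ p : ℝ × ℝ, u₂ p = Real.log p.2 + β₂ * Real.log (k - p.1 - p.2))
    (x : ℝ × ℝ) (hx₁ : 0 < x.1) (hx₂ : 0 < x.2) (hxsum : x.1 + x.2 < k)
    (hfront : (1 + β₁) * x.1 + (1 + β₂) * x.2 = k) :
    ∀ y : ℝ × ℝ, 0 < y.1 → 0 < y.2 → y.1 + y.2 < k → y ≠ x →
      u₁ y < u₁ x ∨ u₂ y < u₂ x := by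
  intro y hy₁ hy₂ hysum hne
  by_contra h
  push_neg at h
  obtain ⟨h1, h2⟩ := h
  rw [hu₁ y, hu₁ x] at h1
  rw [hu₂ y, hu₂ x] at h2
  set sx : ℝ := k - x.1 - x.2 with hsx
  set sy : ℝ := k - y.1 - y.2 with hsy
  have hsxp : 0 < sx := by simp only [hsx]; linarith
  have hsyp : 0 < sy := by simp only [hsy]; linarith
  set t₁ : ℝ := y.1 / x.1 with ht₁
  set t₂ : ℝ := y.2 / x.2 with ht₂
  set t₃ : ℝ := sy / sx with ht₃
  have ht₁p : 0 < t₁ := div_pos hy₁ hx₁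
  have ht₂p : 0 < t₂ := div_pos hy₂ hx₂
  have ht₃p : 0 < t₃ := div_pos hsyp hsxp
  have hl1 : Real.log t₁ = Real.log y.1 - Real.log x.1 := Real.log_div hy₁.ne' hx₁.ne'
  have hl2 : Real.log t₂ = Real.log y.2 - Real.log x.2 := Real.log_div hy₂.ne' hx₂.ne'
  have hl3 : Real.log t₃ = Real.log sy - Real.log sx := Real.log_div hsyp.ne' hsxp.ne'
  have b1 : Real.log t₁ ≤ t₁ - 1 := Real.log_le_sub_one_of_pos ht₁p
  have b2 : Real.log t₂ ≤ t₂ - 1 := Real.log_le_sub_one_of_pos ht₂p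
  have b3 : Real.log t₃ ≤ t₃ - 1 := Real.log_le_sub_one_of_pos ht₃p
  -- strictness: y ≠ x means t₁ ≠ 1 or t₂ ≠ 1
  have hstrict : Real.log t₁ < t₁ - 1 ∨ Real.log t₂ < t₂ - 1 := by
    have hdiff : y.1 ≠ x.1 ∨ y.2 ≠ x.2 := by
      by_contra hc
      push_neg at hc
      exact hne (Prod.ext hc.1 hc.2)
    rcases hdiff with hc | hc
    · exact Or.inl (Real.log_lt_sub_one_of_pos ht₁p
        (fun h => hc ((div_eq_one_iff_eq hx₁.ne').mp h)))
    · exact Or.inr (Real.log_lt_sub_one_of_pos ht₂p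
        (fun h => hc ((div_eq_one_iff_eq hx₂.ne').mp h)))
  -- nonnegativity of each party's gain
  have hd3 : β₁ * Real.log t₃ = β₁ * Real.log sy - β₁ * Real.log sx := by rw [hl3]; ring
  have hd3' : β₂ * Real.log t₃ = β₂ * Real.log sy - β₂ * Real.log sx := by rw [hl3]; ring
  have g1 : 0 ≤ Real.log t₁ + β₁ * Real.log t₃ := by
    rw [hl1, hd3]; linarith
  have g2 : 0 ≤ Real.log t₂ + β₂ * Real.log t₃ := by
    rw [hl2, hd3']; linarith
  -- frontier identity
  have hfx : sx = β₁ * x.1 + β₂ * x.2 := by simp only [hsx]; linarith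
  have e1 : x.1 * t₁ = y.1 := by rw [ht₁]; field_simp [hx₁.ne']
  have e2 : x.2 * t₂ = y.2 := by rw [ht₂]; field_simp [hx₂.ne']
  have e3 : sx * t₃ = sy := by rw [ht₃]; field_simp [hsxp.ne']
  have hid : x.1 * (t₁ - 1) + x.2 * (t₂ - 1) + sx * (t₃ - 1) = 0 := by
    have hsum : sy = sx - (y.1 - x.1) - (y.2 - x.2) := by simp only [hsx, hsy]; ring
    linear_combination e1 + e2 + e3 + hsum
  have m1 : x.1 * Real.log t₁ ≤ x.1 * (t₁ - 1) := mul_le_mul_of_nonneg_left b1 hx₁.le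
  have m2 : x.2 * Real.log t₂ ≤ x.2 * (t₂ - 1) := mul_le_mul_of_nonneg_left b2 hx₂.le
  have m3 : sx * Real.log t₃ ≤ sx * (t₃ - 1) := mul_le_mul_of_nonneg_left b3 hsxp.le
  have meq : x.1 * (β₁ * Real.log t₃) + x.2 * (β₂ * Real.log t₃) = sx * Real.log t₃ := by
    rw [hfx]; ring
  have key : x.1 * (Real.log t₁ + β₁ * Real.log t₃)
      + x.2 * (Real.log t₂ + β₂ * Real.log t₃) < 0 := by
    have expand : x.1 * (Real.log t₁ + β₁ * Real.log t₃)
        + x.2 * (Real.log t₂ + β₂ * Real.log t₃)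
        = x.1 * Real.log t₁ + x.2 * Real.log t₂
          + (x.1 * (β₁ * Real.log t₃) + x.2 * (β₂ * Real.log t₃)) := by ring
    rw [expand, meq]
    rcases hstrict with hs | hs
    · have m1' : x.1 * Real.log t₁ < x.1 * (t₁ - 1) :=
        mul_lt_mul_of_pos_left hs hx₁
      linarith
    · have m2' : x.2 * Real.log t₂ < x.2 * (t₂ - 1) :=
        mul_lt_mul_of_pos_left hs hx₂
      linarith
  nlinarith [mul_nonneg hx₁.le g1, mul_nonneg hx₂.le g2]
end

section
/- Fix k > 0, β₁ > 0, β₂ > 0 and let u₁(x₁,x₂) = log x₁ + β₁ log(k − x₁ − x₂), u₂(x₁,x₂) = log x₂ + β₂ log(k − x₁ − x₂). If x = (x₁,x₂) satisfies x₁ > 0, x₂ > 0, x₁ + x₂ < k and (1+β₁)x₁ + (1+β₂)x₂ ≠ k, then there exists y = (y₁,y₂) with y₁ > 0, y₂ > 0, y₁ + y₂ < k such that u₁(y) > u₁(x) and u₂(y) > u₂(x). That is, every interior point off the line (1+β₁)x₁ + (1+β₂)x₂ = k is not Pareto efficient. -/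
open Filter Topology

/-- `log z ≥ 1 - 1/z` for `z > 0`. -/
lemma aux_one_sub_inv_le_log {z : ℝ} (hz : 0 < z) : 1 - z⁻¹ ≤ Real.log z := by
  have h := Real.log_le_sub_one_of_pos (inv_pos.mpr hz)
  rw [Real.log_inv] at h
  linarith

/-- Improvement criterion: an algebraic inequality implies the log-utility inequality. -/
lemma aux_improve {β a b r s : ℝ} (ha : 0 < a) (hb : 0 < b) (hr : 0 < r) (hs : 0 < s)
    (hβ : 0 < β) (h : 0 < (b - a) * s + β * (b * (s - r))) :
    Real.log a + β * Real.log r < Real.log b + β * Real.log s := by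
  have h1 : 1 - (b/a)⁻¹ ≤ Real.log (b/a) := aux_one_sub_inv_le_log (div_pos hb ha)
  have h2 : 1 - (s/r)⁻¹ ≤ Real.log (s/r) := aux_one_sub_inv_le_log (div_pos hs hr)
  rw [Real.log_div hb.ne' ha.ne'] at h1
  rw [Real.log_div hs.ne' hr.ne'] at h2
  have e1 : (b/a)⁻¹ = a/b := by field_simp
  have e2 : (s/r)⁻¹ = r/s := by field_simp
  rw [e1] at h1; rw [e2] at h2
  have h2' : β * (1 - r/s) ≤ β * (Real.log s - Real.log r) :=
    mul_le_mul_of_nonneg_left h2 hβ.le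
  have hkey : 0 < (1 - a/b) + β * (1 - r/s) := by
    have hpos : 0 < ((b - a) * s + β * (b * (s - r))) / (b * s) :=
      div_pos h (mul_pos hb hs)
    have heq : (1 - a/b) + β * (1 - r/s) = ((b - a) * s + β * (b * (s - r))) / (b * s) := by
      field_simp
    rw [heq]; exact hpos
  nlinarith

/-- Eventually-positive helper on the right neighborhood of `0`. -/
lemma aux_ev (f : ℝ → ℝ) (hf : Continuous f) (h0 : 0 < f 0) :
    ∀ᶠ t in nhdsWithin (0:ℝ) (Set.Ioi 0), 0 < f t :=
  ((hf.tendsto 0).mono_left nhdsWithin_le_nhds).eventually (eventually_gt_nhds h0)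

/-- Fix `k > 0`, `β₁ > 0`, `β₂ > 0` and the utilities
`u₁ (x₁,x₂) = log x₁ + β₁ log (k-x₁-x₂)`, `u₂ (x₁,x₂) = log x₂ + β₂ log (k-x₁-x₂)`.
If `x = (x₁,x₂)` lies in the open region but off the line
`(1+β₁)x₁+(1+β₂)x₂ = k`, then some point `y` of the open region strictly
improves both utilities: `x` is not Pareto efficient. -/
theorem stmt_6 (k β₁ β₂ : ℝ) (hk : 0 < k) (hβ₁ : 0 < β₁) (hβ₂ : 0 < β₂)
    (u₁ u₂ : ℝ × ℝ → ℝ)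
    (hu₁ : ∀ p : ℝ × ℝ, u₁ p = Real.log p.1 + β₁ * Real.log (k - p.1 - p.2))
    (hu₂ : ∀ p : ℝ × ℝ, u₂ p = Real.log p.2 + β₂ * Real.log (k - p.1 - p.2))
    (x : ℝ × ℝ) (hx₁ : 0 < x.1) (hx₂ : 0 < x.2) (hxsum : x.1 + x.2 < k)
    (hoff : (1 + β₁) * x.1 + (1 + β₂) * x.2 ≠ k) :
    ∃ y : ℝ × ℝ, 0 < y.1 ∧ 0 < y.2 ∧ y.1 + y.2 < k ∧
      u₁ x < u₁ y ∧ u₂ x < u₂ y := by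
  set r : ℝ := k - x.1 - x.2 with hrdef
  have hr : 0 < r := by rw [hrdef]; linarith
  set g : ℝ := (r - β₁ * x.1 - β₂ * x.2) / 3 with hgdef
  have hg : g ≠ 0 := by
    intro h
    apply hoff
    rw [hgdef, div_eq_zero_iff] at h
    rcases h with h | h
    · rw [hrdef] at h; linarith
    · norm_num at h
  have hg2 : 0 < g ^ 2 := pow_two_pos_of_ne_zero hg
  set a₁ : ℝ := β₁ * x.1 + g with ha₁def
  set a₂ : ℝ := β₂ * x.2 + g with ha₂def
  -- The five conditions, eventually for small positive t.
  have hE1 : ∀ᶠ t in nhdsWithin (0:ℝ) (Set.Ioi 0), 0 < x.1 + t * (g * a₁) :=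
    aux_ev _ (by fun_prop) (by simpa using hx₁)
  have hE2 : ∀ᶠ t in nhdsWithin (0:ℝ) (Set.Ioi 0), 0 < x.2 + t * (g * a₂) :=
    aux_ev _ (by fun_prop) (by simpa using hx₂)
  have hE3 : ∀ᶠ t in nhdsWithin (0:ℝ) (Set.Ioi 0), 0 < r - t * (g * (r - g)) :=
    aux_ev _ (by fun_prop) (by simpa using hr)
  have hE4 : ∀ᶠ t in nhdsWithin (0:ℝ) (Set.Ioi 0),
      0 < g * (a₁ * (r - t * (g * (r - g))) - β₁ * ((x.1 + t * (g * a₁)) * (r - g))) := by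
    apply aux_ev _ (by fun_prop)
    have : g * (a₁ * (r - 0 * (g * (r - g))) - β₁ * ((x.1 + 0 * (g * a₁)) * (r - g)))
        = g ^ 2 * (r + β₁ * x.1) := by rw [ha₁def]; ring
    rw [this]
    positivity
  have hE5 : ∀ᶠ t in nhdsWithin (0:ℝ) (Set.Ioi 0),
      0 < g * (a₂ * (r - t * (g * (r - g))) - β₂ * ((x.2 + t * (g * a₂)) * (r - g))) := by
    apply aux_ev _ (by fun_prop)
    have : g * (a₂ * (r - 0 * (g * (r - g))) - β₂ * ((x.2 + 0 * (g * a₂)) * (r - g)))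
        = g ^ 2 * (r + β₂ * x.2) := by rw [ha₂def]; ring
    rw [this]
    positivity
  obtain ⟨t, ⟨h1, h2, h3, h4, h5⟩, ht⟩ :=
    ((hE1.and (hE2.and (hE3.and (hE4.and hE5)))).and eventually_mem_nhdsWithin).exists
  rw [Set.mem_Ioi] at ht
  refine ⟨(x.1 + t * (g * a₁), x.2 + t * (g * a₂)), h1, h2, ?_, ?_, ?_⟩
  · -- sum < k
    have hsum : k - (x.1 + t * (g * a₁)) - (x.2 + t * (g * a₂)) = r - t * (g * (r - g)) := by
      rw [ha₁def, ha₂def, hrdef, hgdef]; ring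
    simp only [Prod.fst, Prod.snd]
    linarith [hsum, h3]
  · -- u₁ improves
    rw [hu₁, hu₁]
    have hryeq : k - (x.1 + t * (g * a₁), x.2 + t * (g * a₂)).1
        - (x.1 + t * (g * a₁), x.2 + t * (g * a₂)).2 = r - t * (g * (r - g)) := by
      simp only
      rw [ha₁def, ha₂def, hrdef, hgdef]; ring
    rw [hryeq]
    have hrx : k - x.1 - x.2 = r := hrdef.symm
    rw [hrx]
    apply aux_improve hx₁ h1 hr h3 hβ₁
    have heq : (x.1 + t * (g * a₁) - x.1) * (r - t * (g * (r - g)))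
        + β₁ * ((x.1 + t * (g * a₁)) * (r - t * (g * (r - g)) - r))
        = t * (g * (a₁ * (r - t * (g * (r - g))) - β₁ * ((x.1 + t * (g * a₁)) * (r - g)))) := by
      ring
    rw [heq]
    exact mul_pos ht h4
  · -- u₂ improves
    rw [hu₂, hu₂]
    have hryeq : k - (x.1 + t * (g * a₁), x.2 + t * (g * a₂)).1
        - (x.1 + t * (g * a₁), x.2 + t * (g * a₂)).2 = r - t * (g * (r - g)) := by
      simp only
      rw [ha₁def, ha₂def, hrdef, hgdef]; ring
    rw [hryeq]
    have hrx : k - x.1 - x.2 = r := hrdef.symm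
    rw [hrx]
    apply aux_improve hx₂ h2 hr h3 hβ₂
    have heq : (x.2 + t * (g * a₂) - x.2) * (r - t * (g * (r - g)))
        + β₂ * ((x.2 + t * (g * a₂)) * (r - t * (g * (r - g)) - r))
        = t * (g * (a₂ * (r - t * (g * (r - g))) - β₂ * ((x.2 + t * (g * a₂)) * (r - g)))) := by
      ring
    rw [heq]
    exact mul_pos ht h5
end

section
/- Fix k > 0, β₁ > 0, β₂ > 0 and let u₁(x₁,x₂) = log x₁ + β₁ log(k − x₁ − x₂), u₂(x₁,x₂) = log x₂ + β₂ log(k − x₁ − x₂). Let x = (x₁,x₂) satisfy x₁ > 0, x₂ > 0, x₁ + x₂ < k and (1+β₁)x₁ + (1+β₂)x₂ ≠ k, and set G = ∇u₁(x)/(2‖∇u₁(x)‖) + ∇u₂(x)/(2‖∇u₂(x)‖). Then ⟨G, ∇u₁(x)⟩ > 0 and ⟨G, ∇u₂(x)⟩ > 0; that is, at every interior point off the Pareto frontier line, the IDM bisector direction strictly improves both parties' utilities to first order. -/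
open scoped RealInnerProductSpace

lemma key_cs (a b c d : ℝ) (h : a*d - b*c ≠ 0) :
    |a*c + b*d| < Real.sqrt (a^2+b^2) * Real.sqrt (c^2+d^2) := by
  rw [← Real.sqrt_mul (by positivity)]
  rw [show |a*c + b*d| = Real.sqrt ((a*c+b*d)^2) by rw [Real.sqrt_sq_eq_abs]]
  apply Real.sqrt_lt_sqrt (by positivity)
  nlinarith [sq_pos_of_ne_zero h]

/-- At an interior point `x = (x₁,x₂)` (with `x₁,x₂ > 0`, `x₁+x₂ < k`) off the
Pareto frontier line `(1+β₁)x₁ + (1+β₂)x₂ = k`, the IDM bisector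
`G = ∇u₁/(2‖∇u₁‖) + ∇u₂/(2‖∇u₂‖)` of the two utility gradients
`∇u₁ = (1/x₁ - β₁/(k-x₁-x₂), -β₁/(k-x₁-x₂))` and
`∇u₂ = (-β₂/(k-x₁-x₂), 1/x₂ - β₂/(k-x₁-x₂))` satisfies
`⟪G, ∇u₁⟫ > 0` and `⟪G, ∇u₂⟫ > 0`. -/
theorem stmt_10 (k β₁ β₂ x₁ x₂ : ℝ) (hk : 0 < k) (hβ₁ : 0 < β₁) (hβ₂ : 0 < β₂)
    (hx₁ : 0 < x₁) (hx₂ : 0 < x₂) (hsum : x₁ + x₂ < k)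
    (hoff : (1 + β₁) * x₁ + (1 + β₂) * x₂ ≠ k)
    (g₁ g₂ G : EuclideanSpace ℝ (Fin 2))
    (hg₁ : g₁ = ![1 / x₁ - β₁ / (k - x₁ - x₂), -β₁ / (k - x₁ - x₂)])
    (hg₂ : g₂ = ![-β₂ / (k - x₁ - x₂), 1 / x₂ - β₂ / (k - x₁ - x₂)])
    (hG : G = (2 * ‖g₁‖)⁻¹ • g₁ + (2 * ‖g₂‖)⁻¹ • g₂) :
    0 < ⟪G, g₁⟫ ∧ 0 < ⟪G, g₂⟫ := by
  have hs : 0 < k - x₁ - x₂ := by linarith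
  set a : ℝ := 1 / x₁ - β₁ / (k - x₁ - x₂) with ha
  set b : ℝ := -β₁ / (k - x₁ - x₂) with hb
  set c : ℝ := -β₂ / (k - x₁ - x₂) with hc
  set d : ℝ := 1 / x₂ - β₂ / (k - x₁ - x₂) with hd
  clear_value a b c d
  have hdeteq : a*d - b*c = (k - ((1+β₁)*x₁ + (1+β₂)*x₂)) / (x₁*x₂*(k-x₁-x₂)) := by
    rw [ha, hb, hc, hd]
    field_simp
    ring
  have hdet : a*d - b*c ≠ 0 := by
    rw [hdeteq]
    exact div_ne_zero (sub_ne_zero.mpr (Ne.symm hoff)) (by positivity)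
  have hcs := key_cs a b c d hdet
  have h10 : g₁ 0 = a := by simp [hg₁]
  have h11 : g₁ 1 = b := by simp [hg₁]
  have h20 : g₂ 0 = c := by simp [hg₂]
  have h21 : g₂ 1 = d := by simp [hg₂]
  have hn1 : ‖g₁‖ = Real.sqrt (a^2 + b^2) := by
    rw [EuclideanSpace.norm_eq]
    simp [Fin.sum_univ_two, h10, h11, sq_abs, sq]
  have hn2 : ‖g₂‖ = Real.sqrt (c^2 + d^2) := by
    rw [EuclideanSpace.norm_eq]
    simp [Fin.sum_univ_two, h20, h21, sq_abs, sq]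
  have hinner : ⟪g₁, g₂⟫ = a*c + b*d := by
    rw [PiLp.inner_apply]
    simp [Fin.sum_univ_two, h10, h11, h20, h21, mul_comm]
  have hg₁ne : a^2 + b^2 ≠ 0 := by
    intro h0
    apply hdet
    obtain ⟨hA, hB⟩ := (add_eq_zero_iff_of_nonneg (sq_nonneg a) (sq_nonneg b)).mp h0
    rw [pow_eq_zero_iff two_ne_zero] at hA hB
    rw [hA, hB]; ring
  have hg₂ne : c^2 + d^2 ≠ 0 := by
    intro h0
    apply hdet
    obtain ⟨hA, hB⟩ := (add_eq_zero_iff_of_nonneg (sq_nonneg c) (sq_nonneg d)).mp h0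
    rw [pow_eq_zero_iff two_ne_zero] at hA hB
    rw [hA, hB]; ring
  have hN1 : 0 < ‖g₁‖ := by
    rw [hn1]; exact Real.sqrt_pos.mpr (lt_of_le_of_ne (by positivity) (Ne.symm hg₁ne))
  have hN2 : 0 < ‖g₂‖ := by
    rw [hn2]; exact Real.sqrt_pos.mpr (lt_of_le_of_ne (by positivity) (Ne.symm hg₂ne))
  have hmix : -(‖g₁‖ * ‖g₂‖) < ⟪g₁, g₂⟫ := by
    rw [hn1, hn2, hinner]
    have := neg_lt_of_abs_lt hcs
    linarith
  have e1 : ⟪G, g₁⟫ = (2 * ‖g₁‖)⁻¹ * (‖g₁‖*‖g₁‖) + (2 * ‖g₂‖)⁻¹ * ⟪g₁, g₂⟫ := by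
    rw [hG, inner_add_left, real_inner_smul_left, real_inner_smul_left,
      real_inner_self_eq_norm_mul_norm, real_inner_comm g₂ g₁]
  have e2 : ⟪G, g₂⟫ = (2 * ‖g₂‖)⁻¹ * (‖g₂‖*‖g₂‖) + (2 * ‖g₁‖)⁻¹ * ⟪g₁, g₂⟫ := by
    rw [hG, inner_add_left, real_inner_smul_left, real_inner_smul_left,
      real_inner_self_eq_norm_mul_norm]
    ring
  constructor
  · rw [e1]
    have h1 : (2 * ‖g₁‖)⁻¹ * (‖g₁‖*‖g₁‖) = (2 * ‖g₂‖)⁻¹ * (‖g₁‖ * ‖g₂‖) := by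
      field_simp
    rw [h1, ← mul_add]
    have : 0 < ‖g₁‖ * ‖g₂‖ + ⟪g₁, g₂⟫ := by linarith
    positivity
  · rw [e2]
    have h1 : (2 * ‖g₂‖)⁻¹ * (‖g₂‖*‖g₂‖) = (2 * ‖g₁‖)⁻¹ * (‖g₁‖ * ‖g₂‖) := by
      field_simp
    rw [h1, ← mul_add]
    have : 0 < ‖g₁‖ * ‖g₂‖ + ⟪g₁, g₂⟫ := by linarith
    positivity
end

section
/- Fix k > 0, β₁ > 0 and an interior point x₀ = (x₁,x₂) with x₁ > 0, x₂ > 0, x₁ + x₂ < k. Let u₁(x) = log x₁ + β₁ log(k − x₁ − x₂), and for each β > 0 let u₂^β(x) = log x₂ + β log(k − x₁ − x₂), so ∇u₂^β(x₀) = (−β/(k−x₁−x₂), 1/x₂ − β/(k−x₁−x₂)). Let G(β) = ∇u₁(x₀)/(2‖∇u₁(x₀)‖) + ∇u₂^β(x₀)/(2‖∇u₂^β(x₀)‖) be the mediator's announced IDM bisector direction. Then the map β ↦ G(β) is injective on (0,∞): if G(β) = G(β') for β, β' > 0, then β = β'. Consequently, party 1 can uniquely recover party 2's utility parameter β₂ from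 its own gradient and a single announced bisector direction. -/
/-- IDM is not Information-Concealing: at a fixed interior point
`x₀ = (x₁,x₂)`, let `g₁ = ∇u₁(x₀)` be party 1's gradient and, for each `β > 0`,
let `g₂ β = (-β/(k-x₁-x₂), 1/x₂ - β/(k-x₁-x₂))` be the gradient of party 2's
utility `u₂^β`. The map sending `β` to the announced IDM bisector
`G β = g₁/(2‖g₁‖) + (g₂ β)/(2‖g₂ β‖)` is injective on `(0, ∞)`: party 1 can
uniquely recover `β₂` from a single announcement. -/
theorem stmt_11 (k β₁ x₁ x₂ : ℝ) (hk : 0 < k) (hβ₁ : 0 < β₁)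
    (hx₁ : 0 < x₁) (hx₂ : 0 < x₂) (hsum : x₁ + x₂ < k)
    (g₁ : EuclideanSpace ℝ (Fin 2))
    (hg₁ : g₁ = ![1 / x₁ - β₁ / (k - x₁ - x₂), -β₁ / (k - x₁ - x₂)])
    (g₂ : ℝ → EuclideanSpace ℝ (Fin 2))
    (hg₂ : ∀ β : ℝ, g₂ β = ![-β / (k - x₁ - x₂), 1 / x₂ - β / (k - x₁ - x₂)])
    (G : ℝ → EuclideanSpace ℝ (Fin 2))
    (hG : ∀ β : ℝ, G β = (2 * ‖g₁‖)⁻¹ • g₁ + (2 * ‖g₂ β‖)⁻¹ • g₂ β) :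
    ∀ β β' : ℝ, 0 < β → 0 < β' → G β = G β' → β = β' := by
  intro β β' hβ hβ' hEq
  have hc : 0 < k - x₁ - x₂ := by linarith
  have hne : ∀ b : ℝ, 0 < b → g₂ b ≠ 0 := by
    intro b hb h0
    have h1 : (g₂ b) 0 = (0 : EuclideanSpace ℝ (Fin 2)) 0 := by rw [h0]
    rw [hg₂] at h1
    simp at h1
    rcases h1 with h | h <;> linarith
  have hnβ : (0:ℝ) < ‖g₂ β‖ := norm_pos_iff.mpr (hne β hβ)
  have hnβ' : (0:ℝ) < ‖g₂ β'‖ := norm_pos_iff.mpr (hne β' hβ')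
  set a := (2 * ‖g₂ β‖)⁻¹ with ha
  set a' := (2 * ‖g₂ β'‖)⁻¹ with ha'
  have hapos : 0 < a := by positivity
  have ha'pos : 0 < a' := by positivity
  have key : a • g₂ β = a' • g₂ β' := by
    have := hEq
    rw [hG β, hG β'] at this
    exact add_left_cancel this
  have h0 : a * (-β / (k - x₁ - x₂)) = a' * (-β' / (k - x₁ - x₂)) := by
    have := congrArg (fun v => v 0) key
    rw [WithLp.ofLp_smul, WithLp.ofLp_smul, hg₂ β, hg₂ β'] at this
    simpa using this
  have h1 : a * (1 / x₂ - β / (k - x₁ - x₂)) = a' * (1 / x₂ - β' / (k - x₁ - x₂)) := by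
    have := congrArg (fun v => v 1) key
    rw [WithLp.ofLp_smul, WithLp.ofLp_smul, hg₂ β, hg₂ β'] at this
    simpa using this
  have haa : a = a' := by
    have hx₂ne : (1:ℝ) / x₂ ≠ 0 := by positivity
    have : a * (1 / x₂) = a' * (1 / x₂) := by ring_nf at h0 h1 ⊢; nlinarith [h0, h1]
    exact mul_right_cancel₀ hx₂ne this
  rw [haa] at h0
  have h2 : -β / (k - x₁ - x₂) = -β' / (k - x₁ - x₂) :=
    mul_left_cancel₀ (ne_of_gt ha'pos) h0
  field_simp at h2
  linarith
end

section
/- Fix k > 0, β₁ > 0, β₂ > 0 and let u₁(x₁,x₂) = log x₁ + β₁ log(k − x₁ − x₂), u₂(x₁,x₂) = log x₂ + β₂ log(k − x₁ − x₂). Let x = (x₁,x₂) satisfy x₁ > 0, x₂ > 0, x₁ + x₂ < k and (1+β₁)x₁ + (1+β₂)x₂ = k, and let t > 0 be such that ∇u₁(x) = −t·∇u₂(x). Then x is the unique maximizer over Ω = {(y₁,y₂) : y₁ > 0, y₂ > 0, y₁ + y₂ < k} of the strictly concave function φ = u₁ + t·u₂; that is, for every y ∈ Ω with y ≠ x, u₁(y)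 + t·u₂(y) < u₁(x) + t·u₂(x). -/
private lemma log_sub_le' (a b : ℝ) (ha : 0 < a) (hb : 0 < b) :
    Real.log a - Real.log b ≤ a / b - 1 := by
  have h := Real.log_le_sub_one_of_pos (div_pos ha hb)
  rwa [Real.log_div (ne_of_gt ha) (ne_of_gt hb)] at h

private lemma log_sub_lt' (a b : ℝ) (ha : 0 < a) (hb : 0 < b) (hne : a ≠ b) :
    Real.log a - Real.log b < a / b - 1 := by
  have h := Real.log_lt_sub_one_of_pos (div_pos ha hb)
    (by
      intro h
      exact hne (by field_simp at h; linarith))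
  rwa [Real.log_div (ne_of_gt ha) (ne_of_gt hb)] at h

/-- Scalarization: let `x = (x₁,x₂)` lie in the open region and on the frontier
line `(1+β₁)x₁ + (1+β₂)x₂ = k`, and let `t > 0` satisfy
`∇u₁(x) = -t • ∇u₂(x)`. Then `x` is the unique maximizer over
`Ω = {y : 0 < y₁, 0 < y₂, y₁ + y₂ < k}` of `φ = u₁ + t • u₂`. -/
theorem stmt_15 (k β₁ β₂ : ℝ) (hk : 0 < k) (hβ₁ : 0 < β₁) (hβ₂ : 0 < β₂)
    (u₁ u₂ : ℝ × ℝ → ℝ)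
    (hu₁ : ∀ p : ℝ × ℝ, u₁ p = Real.log p.1 + β₁ * Real.log (k - p.1 - p.2))
    (hu₂ : ∀ p : ℝ × ℝ, u₂ p = Real.log p.2 + β₂ * Real.log (k - p.1 - p.2))
    (x : ℝ × ℝ) (hx₁ : 0 < x.1) (hx₂ : 0 < x.2) (hxsum : x.1 + x.2 < k)
    (hfront : (1 + β₁) * x.1 + (1 + β₂) * x.2 = k)
    (t : ℝ) (ht : 0 < t)
    (hgrad : ((1 / x.1 - β₁ / (k - x.1 - x.2), -β₁ / (k - x.1 - x.2)) : ℝ × ℝ) =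
      -t • ((-β₂ / (k - x.1 - x.2), 1 / x.2 - β₂ / (k - x.1 - x.2)) : ℝ × ℝ)) :
    ∀ y : ℝ × ℝ, 0 < y.1 → 0 < y.2 → y.1 + y.2 < k → y ≠ x →
      u₁ y + t * u₂ y < u₁ x + t * u₂ x := by
  intro y hy1 hy2 hysum hne
  have hs : 0 < k - x.1 - x.2 := by linarith
  have hsy : 0 < k - y.1 - y.2 := by linarith
  have h1 := congrArg Prod.fst hgrad
  have h2 := congrArg Prod.snd hgrad
  simp only [Prod.smul_fst, Prod.smul_snd, smul_eq_mul] at h1 h2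
  -- derive linear relations
  have hA : k - x.1 - x.2 = x.1 * (β₁ + t * β₂) := by
    field_simp at h1
    nlinarith [h1]
  have hB : t * (k - x.1 - x.2) = x.2 * (β₁ + t * β₂) := by
    field_simp at h2
    nlinarith [h2]
  have hBpos : 0 < β₁ + t * β₂ := by positivity
  have Esum : (y.1 / x.1 - 1) + t * (y.2 / x.2 - 1)
      + (β₁ + t * β₂) * ((k - y.1 - y.2) / (k - x.1 - x.2) - 1) = 0 := by
    field_simp
    linear_combination ((y.1 - x.1) * x.2) * hA + ((y.2 - x.2) * x.1) * hB
  have D1 := log_sub_le' y.1 x.1 hy1 hx₁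
  have D2 := log_sub_le' y.2 x.2 hy2 hx₂
  have D3 := log_sub_le' (k - y.1 - y.2) (k - x.1 - x.2) hsy hs
  have hD2' : t * (Real.log y.2 - Real.log x.2) ≤ t * (y.2 / x.2 - 1) :=
    mul_le_mul_of_nonneg_left D2 ht.le
  have hD3' : (β₁ + t * β₂) * (Real.log (k - y.1 - y.2) - Real.log (k - x.1 - x.2))
      ≤ (β₁ + t * β₂) * ((k - y.1 - y.2) / (k - x.1 - x.2) - 1) :=
    mul_le_mul_of_nonneg_left D3 hBpos.le
  rw [hu₁ y, hu₂ y, hu₁ x, hu₂ x]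
  by_cases hx1e : y.1 = x.1
  · have hx2e : y.2 ≠ x.2 := by
      intro h
      exact hne (Prod.ext hx1e h)
    have D2' := log_sub_lt' y.2 x.2 hy2 hx₂ hx2e
    have hD2'' : t * (Real.log y.2 - Real.log x.2) < t * (y.2 / x.2 - 1) :=
      (mul_lt_mul_iff_right₀ ht).mpr D2'
    have key : (Real.log y.1 - Real.log x.1) + t * (Real.log y.2 - Real.log x.2)
        + (β₁ + t * β₂) * (Real.log (k - y.1 - y.2) - Real.log (k - x.1 - x.2)) < 0 := by
      linarith [D1, hD2'', hD3', Esum]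
    ring_nf at key ⊢
    linarith [key]
  · have D1' := log_sub_lt' y.1 x.1 hy1 hx₁ hx1e
    have key : (Real.log y.1 - Real.log x.1) + t * (Real.log y.2 - Real.log x.2)
        + (β₁ + t * β₂) * (Real.log (k - y.1 - y.2) - Real.log (k - x.1 - x.2)) < 0 := by
      linarith [D1', hD2', hD3', Esum]
    ring_nf at key ⊢
    linarith [key]
end
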